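/- Let Q₃ : M^{3×3} → ℝ be a quadratic form which is positive definite on symmetric matrices and satisfies Q₃(F) = Q₃(sym F) for all F. Define Q₂ on M^{2×2} by Q₂(G) := min { Q₃(F) : F'' = G }. Then Q₂ is positive definite on symmetric 2×2 matrices: Q₂(G) > 0 whenever G is symmetric and G ≠ 0, and Q₂(G) = Q₂(sym G) for all G. -/

import Mathlib

open Matrix

attribute [local instance] Matrix.normedAddCommGroup Matrix.normedSpace

namespace Stmt8Aux

noncomputable section

def sym3 (F : Matrix (Fin 3) (Fin 3) ℝ) : Matrix (Fin 3) (Fin 3) ℝ :=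
  (1/2 : ℝ) • (F + Fᵀ)

def sym2 (G : Matrix (Fin 2) (Fin 2) ℝ) : Matrix (Fin 2) (Fin 2) ℝ :=
  (1/2 : ℝ) • (G + Gᵀ)

def ext2 (G : Matrix (Fin 2) (Fin 2) ℝ) : Matrix (Fin 3) (Fin 3) ℝ :=
  fun i j => if hi : (i : ℕ) < 2 then if hj : (j : ℕ) < 2 then G ⟨i, hi⟩ ⟨j, hj⟩ else 0 else 0

lemma ext2_block (G : Matrix (Fin 2) (Fin 2) ℝ) (i j : Fin 2) :
    ext2 G i.castSucc j.castSucc = G i j := by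
  simp [ext2, show (i : ℕ) ≤ 1 by omega, show (j : ℕ) ≤ 1 by omega]

lemma ext2_transpose (G : Matrix (Fin 2) (Fin 2) ℝ) : (ext2 G)ᵀ = ext2 Gᵀ := by
  ext i j
  simp only [transpose_apply, ext2]
  split_ifs <;> simp [Matrix.transpose_apply]

lemma ext2_neg (G : Matrix (Fin 2) (Fin 2) ℝ) : ext2 (-G) = -(ext2 G) := by
  ext i j
  simp only [ext2, Matrix.neg_apply]
  split_ifs <;> simp

lemma sym3_transpose (F : Matrix (Fin 3) (Fin 3) ℝ) : (sym3 F)ᵀ = sym3 F := by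
  simp [sym3, transpose_smul, transpose_add, add_comm]

lemma sym3_add (A B : Matrix (Fin 3) (Fin 3) ℝ) : sym3 (A + B) = sym3 A + sym3 B := by
  simp [sym3, transpose_add, smul_add, add_add_add_comm]

lemma sym3_block {F : Matrix (Fin 3) (Fin 3) ℝ} {G : Matrix (Fin 2) (Fin 2) ℝ}
    (h : ∀ i j : Fin 2, F i.castSucc j.castSucc = G i j) :
    ∀ i j : Fin 2, (sym3 F) i.castSucc j.castSucc = sym2 G i j := by
  intro i j
  simp [sym3, sym2, Matrix.smul_apply, Matrix.add_apply, Matrix.transpose_apply, h i j, h j i]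

lemma sym2_skew (G : Matrix (Fin 2) (Fin 2) ℝ) : (G - sym2 G)ᵀ = -(G - sym2 G) := by
  ext i j
  simp [sym2, Matrix.sub_apply, Matrix.add_apply, Matrix.smul_apply, Matrix.transpose_apply]
  ring

lemma sym3_ext2_skew (G : Matrix (Fin 2) (Fin 2) ℝ) : sym3 (ext2 (G - sym2 G)) = 0 := by
  rw [sym3, ext2_transpose, sym2_skew, ext2_neg, add_neg_cancel, smul_zero]

lemma sym2_of_symm {G : Matrix (Fin 2) (Fin 2) ℝ} (hG : Gᵀ = G) : sym2 G = G := by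
  rw [sym2, hG, ← two_smul ℝ, smul_smul]
  norm_num

end

end Stmt8Aux

open Stmt8Aux

/-- If `Q₃` is positive definite on symmetric matrices and depends only on the
symmetric part, then the reduced form `Q₂` is positive definite on symmetric
`2×2` matrices and depends only on the symmetric part. -/
theorem stmt8 (Q3 : QuadraticForm ℝ (Matrix (Fin 3) (Fin 3) ℝ))
    (hsym : ∀ F : Matrix (Fin 3) (Fin 3) ℝ, Q3 F = Q3 ((1/2 : ℝ) • (F + Fᵀ)))
    (hpos : ∀ S : Matrix (Fin 3) (Fin 3) ℝ, Sᵀ = S → S ≠ 0 → 0 < Q3 S) :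
    ∀ Q2 : Matrix (Fin 2) (Fin 2) ℝ → ℝ,
      (Q2 = fun G => sInf {r : ℝ | ∃ F : Matrix (Fin 3) (Fin 3) ℝ,
          (∀ i j : Fin 2, F i.castSucc j.castSucc = G i j) ∧ Q3 F = r}) →
      (∀ G : Matrix (Fin 2) (Fin 2) ℝ, Gᵀ = G → G ≠ 0 → 0 < Q2 G)
        ∧ ∀ G : Matrix (Fin 2) (Fin 2) ℝ, Q2 G = Q2 ((1/2 : ℝ) • (G + Gᵀ)) := by
  intro Q2 hQ2
  subst hQ2
  have hsym' : ∀ F, Q3 F = Q3 (sym3 F) := hsym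
  -- continuity of Q3
  have hcont : Continuous fun F : Matrix (Fin 3) (Fin 3) ℝ => Q3 F := by
    set B := QuadraticMap.associatedHom ℝ Q3 with hB
    have hQ : ∀ x, Q3 x = B x x := fun x =>
      (QuadraticMap.associated_eq_self_apply ℝ Q3 x).symm
    let L : Matrix (Fin 3) (Fin 3) ℝ →ₗ[ℝ] (Matrix (Fin 3) (Fin 3) ℝ →L[ℝ] ℝ) :=
      (LinearMap.toContinuousLinearMap.toLinearMap).comp B
    have hL : Continuous L := L.continuous_of_finiteDimensional
    have h2 : Continuous fun x => (L x) x := hL.clm_apply continuous_id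
    have : (fun x => (L x) x) = fun x => Q3 x := by
      funext x
      simp [L, hQ]
    rwa [this] at h2
  -- compact set of symmetric matrices of norm one
  set K : Set (Matrix (Fin 3) (Fin 3) ℝ) := {S | Sᵀ = S ∧ ‖S‖ = 1} with hK
  have hKsub : K = {S : Matrix (Fin 3) (Fin 3) ℝ | Sᵀ = S} ∩ Metric.sphere 0 1 := by
    ext S
    simp [hK, mem_sphere_zero_iff_norm, and_comm]
  have hKclosed : IsClosed {S : Matrix (Fin 3) (Fin 3) ℝ | Sᵀ = S} := by
    have ht : Continuous fun S : Matrix (Fin 3) (Fin 3) ℝ => Sᵀ :=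
      (Matrix.transposeLinearEquiv (Fin 3) (Fin 3) ℝ ℝ).toLinearMap.continuous_of_finiteDimensional
    exact isClosed_eq ht continuous_id
  have hKcompact : IsCompact K := by
    rw [hKsub]
    exact (isCompact_sphere 0 1).inter_left hKclosed
  have hKne : K.Nonempty := by
    refine ⟨‖(1 : Matrix (Fin 3) (Fin 3) ℝ)‖⁻¹ • 1, ?_, ?_⟩
    · rw [transpose_smul, transpose_one]
    · have h1 : ‖(1 : Matrix (Fin 3) (Fin 3) ℝ)‖ ≠ 0 :=
        norm_ne_zero_iff.2 one_ne_zero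
      rw [norm_smul, norm_inv, norm_norm, inv_mul_cancel₀ h1]
  obtain ⟨S0, hS0K, hmin⟩ := hKcompact.exists_isMinOn hKne hcont.continuousOn
  have hS0ne : S0 ≠ 0 := by
    intro h
    have := hS0K.2
    rw [h, norm_zero] at this
    exact one_ne_zero this.symm
  have hc : 0 < Q3 S0 := hpos S0 hS0K.1 hS0ne
  -- key coercivity estimate on symmetric matrices
  have key : ∀ S : Matrix (Fin 3) (Fin 3) ℝ, Sᵀ = S → Q3 S0 * ‖S‖ ^ 2 ≤ Q3 S := by
    intro S hS
    rcases eq_or_ne S 0 with rfl | hS0'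
    · simp
    · have hn : 0 < ‖S‖ := norm_pos_iff.2 hS0'
      have hmem : ‖S‖⁻¹ • S ∈ K := by
        constructor
        · rw [transpose_smul, hS]
        · rw [norm_smul, norm_inv, norm_norm, inv_mul_cancel₀ hn.ne']
      have hle : Q3 S0 ≤ Q3 (‖S‖⁻¹ • S) := hmin hmem
      have hsmul : Q3 (‖S‖⁻¹ • S) = ‖S‖⁻¹ * ‖S‖⁻¹ * Q3 S := QuadraticMap.map_smul _ _ _
      have h2 : Q3 S0 ≤ Q3 S / ‖S‖ ^ 2 := by
        rw [hsmul] at hle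
        calc Q3 S0 ≤ ‖S‖⁻¹ * ‖S‖⁻¹ * Q3 S := hle
          _ = Q3 S / ‖S‖ ^ 2 := by rw [pow_two, div_eq_mul_inv, mul_inv]; ring
      exact (le_div_iff₀ (by positivity)).1 h2
  -- entry bound by the norm
  have entry_le : ∀ (M : Matrix (Fin 3) (Fin 3) ℝ) (i j : Fin 3), |M i j| ≤ ‖M‖ := by
    intro M i j
    calc |M i j| = ‖M i j‖ := (Real.norm_eq_abs _).symm
      _ ≤ ‖M i‖ := norm_le_pi_norm (M i) j
      _ ≤ ‖M‖ := norm_le_pi_norm M i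
  -- the two sets coincide for G and sym2 G
  have hset : ∀ G : Matrix (Fin 2) (Fin 2) ℝ,
      {r : ℝ | ∃ F : Matrix (Fin 3) (Fin 3) ℝ,
          (∀ i j : Fin 2, F i.castSucc j.castSucc = G i j) ∧ Q3 F = r}
      = {r : ℝ | ∃ F : Matrix (Fin 3) (Fin 3) ℝ,
          (∀ i j : Fin 2, F i.castSucc j.castSucc = sym2 G i j) ∧ Q3 F = r} := by
    intro G
    ext r
    constructor
    · rintro ⟨F, hF, rfl⟩
      exact ⟨sym3 F, sym3_block hF, (hsym' F).symm⟩
    · rintro ⟨F, hF, rfl⟩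
      refine ⟨F + ext2 (G - sym2 G), ?_, ?_⟩
      · intro i j
        have : (F + ext2 (G - sym2 G)) i.castSucc j.castSucc
            = sym2 G i j + (G - sym2 G) i j := by
          rw [Matrix.add_apply, hF i j, ext2_block]
        rw [this, Matrix.sub_apply]
        ring
      · rw [hsym' (F + ext2 (G - sym2 G)), sym3_add, sym3_ext2_skew, add_zero, ← hsym' F]
  constructor
  · intro G hG hG0
    obtain ⟨i0, j0, hij⟩ : ∃ i j, G i j ≠ 0 := by
      by_contra h
      push_neg at h
      exact hG0 (by ext i j; simp [h])
    have hb : 0 < Q3 S0 * (G i0 j0) ^ 2 := by positivity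
    refine lt_of_lt_of_le hb (le_csInf ⟨Q3 (ext2 G), ext2 G, ext2_block G, rfl⟩ ?_)
    rintro r ⟨F, hF, rfl⟩
    have hblock : (sym3 F) i0.castSucc j0.castSucc = G i0 j0 := by
      rw [sym3_block hF i0 j0, sym2_of_symm hG]
    have h1 : |G i0 j0| ≤ ‖sym3 F‖ := hblock ▸ entry_le (sym3 F) _ _
    have h2 : (G i0 j0) ^ 2 ≤ ‖sym3 F‖ ^ 2 := by
      calc (G i0 j0) ^ 2 = |G i0 j0| ^ 2 := (sq_abs _).symm
        _ ≤ ‖sym3 F‖ ^ 2 := pow_le_pow_left₀ (abs_nonneg _) h1 2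
    calc Q3 S0 * (G i0 j0) ^ 2 ≤ Q3 S0 * ‖sym3 F‖ ^ 2 :=
          mul_le_mul_of_nonneg_left h2 hc.le
      _ ≤ Q3 (sym3 F) := key (sym3 F) (sym3_transpose F)
      _ = Q3 F := (hsym' F).symm
  · intro G
    exact congrArg sInf (hset G)
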